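/- Let g : ℝ^m → ℝ be concave and differentiable with L-Lipschitz gradient, attaining its maximum over ℝ₊^m at λ*. Then for every λ ≥ 0, ‖(∇g(λ))₊‖₂ ≤ sqrt(2L(g(λ*) − g(λ))), where (v)₊ denotes componentwise positive part. -/

import Mathlib

open InnerProductSpace
lemma descent_lemma {E : Type*} [NormedAddCommGroup E] [InnerProductSpace ℝ E] [CompleteSpace E]
    (L : ℝ) (hL : 0 < L) (g : E → ℝ) (G : E → E)
    (hg : ∀ x, HasGradientAt g (G x) x)
    (hLip : ∀ x y, ‖G x - G y‖ ≤ L * ‖x - y‖) (x y : E) :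
    g x + (inner ℝ (G x) (y - x) : ℝ) - L / 2 * ‖y - x‖ ^ 2 ≤ g y := by
  set d := y - x with hd
  set φ : ℝ → ℝ := fun t => g (x + t • d) - t * (inner ℝ (G x) d : ℝ) + (L / 2 * ‖d‖ ^ 2) * t ^ 2
    with hφ
  have hderiv : ∀ t : ℝ, HasDerivAt φ
      ((inner ℝ (G (x + t • d)) d : ℝ) - (inner ℝ (G x) d : ℝ) + (L / 2 * ‖d‖ ^ 2) * (2 * t ^ 1)) t := by
    intro t
    have hline : HasDerivAt (fun t : ℝ => x + t • d) d t := by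
      simpa using ((hasDerivAt_id t).smul_const d).const_add x
    have h1 : HasDerivAt (fun t : ℝ => g (x + t • d)) ((toDual ℝ E (G (x + t • d))) d) t :=
      (hg _).hasFDerivAt.comp_hasDerivAt t hline
    rw [InnerProductSpace.toDual_apply_apply] at h1
    have h2 : HasDerivAt (fun t : ℝ => t * (inner ℝ (G x) d : ℝ)) (inner ℝ (G x) d : ℝ) t := by
      simpa using (hasDerivAt_id t).mul_const (inner ℝ (G x) d : ℝ)
    have h3 : HasDerivAt (fun t : ℝ => (L / 2 * ‖d‖ ^ 2) * t ^ 2) ((L / 2 * ‖d‖ ^ 2) * (2 * t ^ 1)) t :=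
      (hasDerivAt_pow 2 t).const_mul (L / 2 * ‖d‖ ^ 2)
    have h4 := (h1.sub h2).add h3
    simp only [pow_one] at h4 ⊢
    exact h4
  have hmono : MonotoneOn φ (Set.Icc 0 1) := by
    apply monotoneOn_of_deriv_nonneg (convex_Icc 0 1)
    · exact Continuous.continuousOn (by
        have : Differentiable ℝ φ := fun t => (hderiv t).differentiableAt
        exact this.continuous)
    · intro t _
      exact (hderiv t).differentiableAt.differentiableWithinAt
    · intro t ht
      rw [interior_Icc] at ht
      rw [(hderiv t).deriv]
      have key : -(L * t * ‖d‖ ^ 2) ≤ (inner ℝ (G (x + t • d)) d : ℝ) - (inner ℝ (G x) d : ℝ) := by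
        have h1 : ((inner ℝ (G (x + t • d)) d : ℝ) - inner ℝ (G x) d) = inner ℝ (G (x + t • d) - G x) d := by
          rw [inner_sub_left]
        rw [h1]
        have h2 := abs_real_inner_le_norm (G (x + t • d) - G x) d
        have h3 : ‖G (x + t • d) - G x‖ ≤ L * ‖(x + t • d) - x‖ := hLip _ _
        have h4 : ‖(x + t • d) - x‖ = t * ‖d‖ := by
          simp [norm_smul, abs_of_pos ht.1]
        have h5 : ‖G (x + t • d) - G x‖ * ‖d‖ ≤ L * t * ‖d‖ ^ 2 := by
          rw [h4] at h3; nlinarith [norm_nonneg d]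
        have h6 := neg_abs_le (inner ℝ (G (x + t • d) - G x) d : ℝ)
        linarith
      nlinarith [ht.1.le]
  have h01 : φ 0 ≤ φ 1 := hmono (by norm_num) (by norm_num) (by norm_num)
  simp only [hφ] at h01
  simp only [zero_smul, add_zero, one_smul, zero_mul, zero_pow, mul_zero, one_pow, mul_one,
    sub_zero, one_mul] at h01
  have : x + d = y := by rw [hd]; abel
  rw [this] at h01
  linarith

/-- Primal-feasibility-type bound: if concave `g` with `L`-Lipschitz gradient
attains its maximum over the nonnegative orthant at `λ*`, then for every
`λ ≥ 0`, `‖(∇g(λ))₊‖₂ ≤ √(2L (g(λ*) - g(λ)))`. -/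
theorem positive_part_gradient_bound_by_dual_gap
    (m : ℕ) (L : ℝ) (hL : 0 < L)
    (g : EuclideanSpace ℝ (Fin m) → ℝ)
    (G : EuclideanSpace ℝ (Fin m) → EuclideanSpace ℝ (Fin m))
    (hg : ∀ x, HasGradientAt g (G x) x)
    (hconc : ConcaveOn ℝ Set.univ g)
    (hLip : ∀ x y, ‖G x - G y‖ ≤ L * ‖x - y‖)
    (lamStar : EuclideanSpace ℝ (Fin m))
    (hStarNonneg : ∀ i, 0 ≤ lamStar i)
    (hStarMax : ∀ μ : EuclideanSpace ℝ (Fin m), (∀ i, 0 ≤ μ i) → g μ ≤ g lamStar)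
    (lam Gplus : EuclideanSpace ℝ (Fin m))
    (hlam : ∀ i, 0 ≤ lam i)
    (hGp : ∀ i, Gplus i = max (G lam i) 0) :
    ‖Gplus‖ ≤ Real.sqrt (2 * L * (g lamStar - g lam)) := by
  -- projected gradient step
  set lamp : EuclideanSpace ℝ (Fin m) :=
    (WithLp.equiv 2 (Fin m → ℝ)).symm (fun i => max (lam i + G lam i / L) 0) with hlamp
  have hlamp_apply : ∀ i, lamp i = max (lam i + G lam i / L) 0 := fun i => rfl
  have hlamp_nonneg : ∀ i, 0 ≤ lamp i := fun i => le_max_right _ _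
  have hdesc := descent_lemma L hL g G hg hLip lam lamp
  -- key componentwise bound
  have hkey : (1 / (2 * L)) * ‖Gplus‖ ^ 2 ≤
      (inner ℝ (G lam) (lamp - lam) : ℝ) - L / 2 * ‖lamp - lam‖ ^ 2 := by
    have hinner : (inner ℝ (G lam) (lamp - lam) : ℝ) = ∑ i, G lam i * (lamp i - lam i) := by
      rw [PiLp.inner_apply]
      simp [RCLike.inner_apply, PiLp.sub_apply]
      exact Finset.sum_congr rfl fun i _ => mul_comm _ _
    have hnorm : ‖lamp - lam‖ ^ 2 = ∑ i, (lamp i - lam i) ^ 2 := by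
      rw [← real_inner_self_eq_norm_sq, PiLp.inner_apply]
      simp [RCLike.inner_apply, PiLp.sub_apply, sq]
    have hnormG : ‖Gplus‖ ^ 2 = ∑ i, Gplus i ^ 2 := by
      rw [← real_inner_self_eq_norm_sq, PiLp.inner_apply]
      simp [RCLike.inner_apply, sq]
    rw [hinner, hnorm, hnormG, Finset.mul_sum, Finset.mul_sum, ← Finset.sum_sub_distrib]
    apply Finset.sum_le_sum
    intro i _
    rw [hlamp_apply, hGp]
    set a := G lam i with ha
    set l := lam i with hl
    have hl0 : 0 ≤ l := hlam i
    rcases le_or_gt 0 (l + a / L) with hc | hc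
    · rw [max_eq_left hc]
      have hv : l + a / L - l = a / L := by ring
      rw [hv]
      rcases le_or_gt a 0 with ha0 | ha0
      · rw [max_eq_right ha0]
        have : a * (a / L) - L / 2 * (a / L) ^ 2 = a ^ 2 / (2 * L) := by
          field_simp; ring
        rw [this]
        have : (0:ℝ) ≤ a ^ 2 / (2 * L) := by positivity
        nlinarith
      · rw [max_eq_left ha0.le]
        have : a * (a / L) - L / 2 * (a / L) ^ 2 = a ^ 2 / (2 * L) := by
          field_simp; ring
        rw [this]
        exact le_of_eq (by ring)
    · rw [max_eq_right hc.le]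
      have ha0 : a ≤ 0 := by
        by_contra h
        push_neg at h
        have : 0 ≤ a / L := div_nonneg h.le hL.le
        linarith
      have haneg : a < -(L * l) := by
        have := hc
        have h2 : a / L < -l := by linarith
        calc a = L * (a / L) := by field_simp
        _ < L * (-l) := by exact mul_lt_mul_of_pos_left h2 hL
        _ = -(L * l) := by ring
      rw [max_eq_right ha0]
      have hv : (0 : ℝ) - l = -l := by ring
      rw [hv]
      have : a * (-l) - L / 2 * (-l) ^ 2 = -l * (a + L / 2 * l) := by ring
      nlinarith
  -- combine
  have h1 : g lam + (1 / (2 * L)) * ‖Gplus‖ ^ 2 ≤ g lamp := by linarith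
  have h2 : g lamp ≤ g lamStar := hStarMax lamp hlamp_nonneg
  have h3 : ‖Gplus‖ ^ 2 ≤ 2 * L * (g lamStar - g lam) := by
    have hL2 : 0 < 2 * L := by linarith
    have : (1 / (2 * L)) * ‖Gplus‖ ^ 2 ≤ g lamStar - g lam := by linarith
    calc ‖Gplus‖ ^ 2 = 2 * L * ((1 / (2 * L)) * ‖Gplus‖ ^ 2) := by field_simp
    _ ≤ 2 * L * (g lamStar - g lam) := by
        exact mul_le_mul_of_nonneg_left this hL2.le
  rw [show ‖Gplus‖ = Real.sqrt (‖Gplus‖ ^ 2) from (Real.sqrt_sq (norm_nonneg _)).symm]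
  exact Real.sqrt_le_sqrt h3
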